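/- The function ψ(x), defined for |x| ≤ 2 by ψ(x) = (1/π)( 4 arctan(|x|/√(4-x²))/|x|³ − √(4-x²)/x² ) and for |x| > 2 by ψ(x) = 2/|x|³, is nonnegative on ℝ \ {0} and integrates to 1 over ℝ: ∫_{-∞}^{∞} ψ(x) dx = 1. -/

import Mathlib

open Real MeasureTheory

/-- The equilibrium density for the rescaled Tricomi-Carlitz polynomials. -/
noncomputable def psiTC (x : ℝ) : ℝ :=
  if |x| < 2 then
    (1 / π) * (4 * Real.arctan (|x| / Real.sqrt (4 - x ^ 2)) / |x| ^ 3
      - Real.sqrt (4 - x ^ 2) / x ^ 2)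
  else 2 / |x| ^ 3

open Set Filter Topology

lemma psiTC_abs (x : ℝ) : psiTC |x| = psiTC x := by
  simp [psiTC, abs_abs, sq_abs]

lemma sqrt_aux (x : ℝ) : Real.sqrt (1 - (x / 2) ^ 2) = Real.sqrt (4 - x ^ 2) / 2 := by
  rw [show (1 : ℝ) - (x / 2) ^ 2 = (4 - x ^ 2) / 2 ^ 2 by ring,
    Real.sqrt_div' _ (by positivity : (0:ℝ) ≤ 2 ^ 2),
    show Real.sqrt (2 ^ 2) = 2 from Real.sqrt_eq_iff_eq_sq (by norm_num) (by norm_num) |>.mpr (by norm_num)]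

lemma psiTC_eq {x : ℝ} (h0 : 0 < x) (h2 : x < 2) :
    psiTC x = (1 / π) * (4 * Real.arcsin (x / 2) / x ^ 3 - Real.sqrt (4 - x ^ 2) / x ^ 2) := by
  have hx : |x| = x := abs_of_pos h0
  have harc : Real.arcsin (x / 2) = Real.arctan (x / Real.sqrt (4 - x ^ 2)) := by
    rw [Real.arcsin_eq_arctan (by constructor <;> [linarith; linarith] :
      x / 2 ∈ Ioo (-1 : ℝ) 1), sqrt_aux]
    congr 1
    have hs : (0:ℝ) ≤ Real.sqrt (4 - x ^ 2) := Real.sqrt_nonneg _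
    field_simp
  rw [psiTC, if_pos (by rw [hx]; exact h2), hx, harc]

lemma key_ineq {x : ℝ} (h0 : 0 ≤ x) (h2 : x ≤ 2) :
    x * Real.sqrt (4 - x ^ 2) ≤ 4 * Real.arcsin (x / 2) := by
  set θ := Real.arcsin (x / 2) with hθ
  have hsin : Real.sin θ = x / 2 := Real.sin_arcsin (by linarith) (by linarith)
  have hcos : Real.cos θ = Real.sqrt (4 - x ^ 2) / 2 := by
    rw [hθ, Real.cos_arcsin, sqrt_aux]
  have hθ0 : 0 ≤ θ := Real.arcsin_nonneg.2 (by linarith)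
  have h := Real.sin_le (by linarith : (0:ℝ) ≤ 2 * θ)
  rw [Real.sin_two_mul, hsin, hcos] at h
  nlinarith [h]

lemma psiTC_nonneg {x : ℝ} (hx : x ≠ 0) : 0 ≤ psiTC x := by
  rw [← psiTC_abs]
  rcases lt_or_ge |x| 2 with h2 | h2
  · have h0 : 0 < |x| := abs_pos.2 hx
    rw [psiTC_eq h0 h2]
    have hk := key_ineq h0.le h2.le
    have h3 : (0:ℝ) < |x| ^ 3 := by positivity
    have hineq : Real.sqrt (4 - |x| ^ 2) / |x| ^ 2 ≤ 4 * Real.arcsin (|x| / 2) / |x| ^ 3 := by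
      rw [div_le_div_iff₀ (by positivity) h3]
      nlinarith [sq_nonneg x, abs_nonneg x]
    exact mul_nonneg (by positivity) (sub_nonneg.2 hineq)
  · rw [psiTC, if_neg (by rw [abs_abs]; exact not_lt.2 h2)]
    positivity

/-- The antiderivative of `psiTC` on `(0,2)`. -/
noncomputable def Ftc (x : ℝ) : ℝ :=
  (1 / π) * (Real.arcsin (x / 2) * (1 - 2 / x ^ 2) + Real.sqrt (4 - x ^ 2) / (2 * x))

lemma Ftc_zero : Ftc 0 = 0 := by
  simp [Ftc]

lemma Ftc_two : Ftc 2 = 1 / 4 := by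
  have hπ : π ≠ 0 := Real.pi_ne_zero
  norm_num [Ftc, Real.arcsin_one]
  field_simp
  ring

lemma Ftc_hasDerivAt {x : ℝ} (h0 : 0 < x) (h2 : x < 2) : HasDerivAt Ftc (psiTC x) x := by
  have hx : x ≠ 0 := h0.ne'
  have h4 : (0:ℝ) < 4 - x ^ 2 := by nlinarith
  set s := Real.sqrt (4 - x ^ 2) with hs
  have hspos : 0 < s := Real.sqrt_pos.2 h4
  have hs2 : s ^ 2 = 4 - x ^ 2 := Real.sq_sqrt h4.le
  have hA : HasDerivAt (fun y : ℝ => Real.arcsin (y / 2)) (1 / s) x := by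
    have hinner : HasDerivAt (fun y : ℝ => y / 2) (1 / 2) x := by
      simpa using (hasDerivAt_id x).div_const 2
    have := (Real.hasDerivAt_arcsin (by linarith : x / 2 ≠ -1)
      (by intro h; rw [div_eq_one_iff_eq (by norm_num)] at h; linarith : x / 2 ≠ 1)).comp x hinner
    refine this.congr_deriv ?_
    symm
    rw [sqrt_aux, ← hs]
    field_simp
  have hB : HasDerivAt (fun y : ℝ => 1 - 2 / y ^ 2) (4 / x ^ 3) x := by
    have hp : HasDerivAt (fun y : ℝ => y ^ 2) (2 * x) x := by
      simpa using hasDerivAt_pow 2 x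
    have := ((hasDerivAt_const x (2:ℝ)).div hp (by positivity)).const_sub 1
    refine this.congr_deriv ?_
    symm
    field_simp
    ring
  have hC : HasDerivAt (fun y : ℝ => Real.sqrt (4 - y ^ 2)) (-x / s) x := by
    have hinner : HasDerivAt (fun y : ℝ => 4 - y ^ 2) (-(2 * x)) x := by
      simpa using ((hasDerivAt_pow 2 x).const_sub 4)
    have := (Real.hasDerivAt_sqrt h4.ne').comp x hinner
    refine this.congr_deriv ?_
    symm
    rw [← hs]
    field_simp
  have hD : HasDerivAt (fun y : ℝ => Real.sqrt (4 - y ^ 2) / (2 * y)) (-2 / (x ^ 2 * s)) x := by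
    have hden : HasDerivAt (fun y : ℝ => 2 * y) 2 x := by
      simpa using (hasDerivAt_id x).const_mul 2
    have := hC.div hden (by positivity : 2 * x ≠ 0)
    refine this.congr_deriv ?_
    symm
    rw [← hs]
    field_simp
    linear_combination hs2
  have := ((hA.mul hB).add hD).const_mul (1 / π)
  rw [psiTC_eq h0 h2]
  refine this.congr_deriv ?_
  symm
  rw [← hs]
  have hkey : 1 / s * (1 - 2 / x ^ 2) + -2 / (x ^ 2 * s) = -(s / x ^ 2) := by
    have hsne : s ≠ 0 := hspos.ne'
    field_simp
    linear_combination hs2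
  calc 1 / π * (4 * Real.arcsin (x / 2) / x ^ 3 - s / x ^ 2)
      = 1 / π * (Real.arcsin (x / 2) * (4 / x ^ 3) + -(s / x ^ 2)) := by ring
    _ = 1 / π * (Real.arcsin (x / 2) * (4 / x ^ 3)
        + (1 / s * (1 - 2 / x ^ 2) + -2 / (x ^ 2 * s))) := by rw [hkey]
    _ = 1 / π * (1 / s * (1 - 2 / x ^ 2) + Real.arcsin (x / 2) * (4 / x ^ 3)
        + -2 / (x ^ 2 * s)) := by ring

lemma N_nonneg {x : ℝ} (h0 : 0 ≤ x) (h2 : x ≤ 2) :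
    0 ≤ 4 * Real.arcsin (x / 2) - x * Real.sqrt (4 - x ^ 2) := by
  linarith [key_ineq h0 h2]

lemma N_le_cube {x : ℝ} (h0 : 0 < x) (hx : x < 2 * Real.sin (1 / 2)) :
    4 * Real.arcsin (x / 2) - x * Real.sqrt (4 - x ^ 2) ≤ x ^ 3 := by
  have hsinhalf : Real.sin (1 / 2) < 1 / 2 := by
    have := Real.sin_lt (by norm_num : (0:ℝ) < 1 / 2)
    linarith
  have hx1 : x < 1 := by linarith
  set θ := Real.arcsin (x / 2) with hθdef
  have hθ0 : 0 < θ := Real.arcsin_pos.2 (by linarith)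
  have hθhalf : θ < 1 / 2 := by
    have h1 : Real.arcsin (x / 2) < Real.arcsin (Real.sin (1 / 2)) := by
      apply Real.strictMonoOn_arcsin ⟨by linarith, by linarith⟩
        ⟨by linarith [Real.neg_one_le_sin (1/2 : ℝ)], Real.sin_le_one _⟩
      linarith
    rwa [Real.arcsin_sin (by linarith [Real.pi_gt_three]) (by linarith [Real.pi_gt_three])] at h1
  have hsin : Real.sin θ = x / 2 := Real.sin_arcsin (by linarith) (by linarith)
  have hcos : Real.cos θ = Real.sqrt (4 - x ^ 2) / 2 := by
    rw [hθdef, Real.cos_arcsin, sqrt_aux]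
  have h2θ : 2 * θ - (2 * θ) ^ 3 / 4 < Real.sin (2 * θ) :=
    lt_of_le_of_lt (by nlinarith [pow_pos (by linarith : (0:ℝ) < 2 * θ) 3])
      (Real.sin_gt_sub_cube (by linarith))
  rw [Real.sin_two_mul, hsin, hcos] at h2θ
  have hsθ : θ - θ ^ 3 / 4 < Real.sin θ := lt_of_le_of_lt (by nlinarith [pow_pos hθ0 3]) (Real.sin_gt_sub_cube hθ0)
  rw [hsin] at hsθ
  have hxθ : (15 : ℝ) / 8 * θ ≤ x := by nlinarith [mul_pos hθ0 hθ0]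
  have hcube : ((15 : ℝ) / 8 * θ) ^ 3 ≤ x ^ 3 :=
    pow_le_pow_left₀ (by positivity) hxθ 3
  nlinarith [hcube, h2θ, mul_pos (mul_pos hθ0 hθ0) hθ0]

lemma two_sin_half_lt_one : 2 * Real.sin (1 / 2) < 1 := by
  have := Real.sin_lt (by norm_num : (0:ℝ) < 1 / 2)
  linarith

lemma two_sin_half_pos : 0 < 2 * Real.sin (1 / 2) := by
  have := Real.sin_pos_of_pos_of_lt_pi (by norm_num : (0:ℝ) < 1 / 2)
    (by linarith [Real.pi_gt_three])
  linarith

lemma Ftc_tendsto_zero : Tendsto Ftc (𝓝[>] (0:ℝ)) (𝓝 0) := by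
  have heq : ∀ᶠ x in 𝓝[>] (0:ℝ), (1 / π) * Real.arcsin (x / 2)
      - (1 / π) * ((4 * Real.arcsin (x / 2) - x * Real.sqrt (4 - x ^ 2)) / (2 * x ^ 2))
      = Ftc x := by
    filter_upwards [self_mem_nhdsWithin] with x (hx : 0 < x)
    have hx0 : (x:ℝ) ≠ 0 := ne_of_gt hx
    unfold Ftc
    field_simp
    ring
  refine Tendsto.congr' heq ?_
  have h1 : Tendsto (fun x : ℝ => (1 / π) * Real.arcsin (x / 2)) (𝓝[>] 0) (𝓝 0) := by
    have hc : ContinuousAt (fun x : ℝ => (1 / π) * Real.arcsin (x / 2)) 0 :=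
      (Real.continuous_arcsin.comp (continuous_id.div_const 2)).continuousAt.const_mul _
    have h0 : (1 / π) * Real.arcsin ((0:ℝ) / 2) = 0 := by simp
    exact (h0 ▸ hc.tendsto).mono_left nhdsWithin_le_nhds
  have h2 : Tendsto (fun x : ℝ =>
      (1 / π) * ((4 * Real.arcsin (x / 2) - x * Real.sqrt (4 - x ^ 2)) / (2 * x ^ 2)))
      (𝓝[>] 0) (𝓝 0) := by
    have hz : Tendsto (fun x : ℝ =>
        (4 * Real.arcsin (x / 2) - x * Real.sqrt (4 - x ^ 2)) / (2 * x ^ 2))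
        (𝓝[>] 0) (𝓝 0) := by
      apply squeeze_zero'
      · filter_upwards [Ioo_mem_nhdsGT_of_mem
          (⟨le_rfl, two_sin_half_pos⟩ : (0:ℝ) ∈ Ico 0 (2 * Real.sin (1 / 2)))] with x hx
        have hx2 : x ≤ 2 := by linarith [hx.2, two_sin_half_lt_one]
        exact div_nonneg (N_nonneg hx.1.le hx2) (by positivity)
      · filter_upwards [Ioo_mem_nhdsGT_of_mem
          (⟨le_rfl, two_sin_half_pos⟩ : (0:ℝ) ∈ Ico 0 (2 * Real.sin (1 / 2)))] with x hx
        have h0 : (0:ℝ) < x := hx.1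
        rw [div_le_iff₀ (by positivity)]
        calc 4 * Real.arcsin (x / 2) - x * Real.sqrt (4 - x ^ 2) ≤ x ^ 3 :=
              N_le_cube h0 hx.2
          _ = x / 2 * (2 * x ^ 2) := by ring
      · have : Tendsto (fun x : ℝ => x / 2) (𝓝 (0:ℝ)) (𝓝 (0 / 2)) :=
          (continuous_id.div_const 2).continuousAt
        simpa using this.mono_left nhdsWithin_le_nhds
    simpa using hz.const_mul (1 / π)
  simpa using h1.sub h2

lemma Ftc_continuousOn : ContinuousOn Ftc (Icc 0 2) := by
  intro x hx
  rcases eq_or_lt_of_le hx.1 with h0 | h0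
  · subst h0
    refine continuousWithinAt_diff_self.mp ?_
    have hsub : Icc (0:ℝ) 2 \ {0} ⊆ Ioi 0 := by
      rintro y ⟨hy1, hy2⟩
      exact lt_of_le_of_ne hy1.1 (Ne.symm hy2)
    have := Ftc_tendsto_zero.mono_left (nhdsWithin_mono 0 hsub)
    rwa [ContinuousWithinAt, Ftc_zero]
  · rcases lt_or_eq_of_le hx.2 with h2 | h2
    · exact (Ftc_hasDerivAt h0 h2).continuousAt.continuousWithinAt
    · subst h2
      apply ContinuousAt.continuousWithinAt
      have h1 : ContinuousAt (fun y : ℝ => Real.arcsin (y / 2)) 2 :=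
        Real.continuous_arcsin.continuousAt.comp (continuous_id.div_const 2).continuousAt
      have h2 : ContinuousAt (fun y : ℝ => 1 - 2 / y ^ 2) 2 :=
        continuousAt_const.sub (continuousAt_const.div ((continuous_pow 2).continuousAt)
          (by norm_num))
      have h3 : ContinuousAt (fun y : ℝ => Real.sqrt (4 - y ^ 2) / (2 * y)) 2 := by
        apply ContinuousAt.div
        · exact Real.continuous_sqrt.continuousAt.comp
            (continuousAt_const.sub ((continuous_pow 2).continuousAt))
        · exact continuousAt_const.mul continuousAt_id
        · norm_num
      exact ((h1.mul h2).add h3).const_mul _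

lemma integral_Ioc_psiTC : ∫ x in Ioc (0:ℝ) 2, psiTC x = 1 / 4 := by
  have hderiv : ∀ x ∈ Ioo (0:ℝ) 2, HasDerivAt Ftc (psiTC x) x :=
    fun x hx => Ftc_hasDerivAt hx.1 hx.2
  have hpos : ∀ x ∈ Ioo (0:ℝ) 2, 0 ≤ psiTC x := fun x hx => psiTC_nonneg hx.1.ne'
  have hint : IntegrableOn psiTC (Ioc 0 2) :=
    intervalIntegral.integrableOn_deriv_of_nonneg Ftc_continuousOn hderiv hpos
  have heq := intervalIntegral.integral_eq_sub_of_hasDeriv_right_of_le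
    (by norm_num : (0:ℝ) ≤ 2) Ftc_continuousOn
    (fun x hx => (hderiv x hx).hasDerivWithinAt)
    ((intervalIntegrable_iff_integrableOn_Ioc_of_le (by norm_num)).2 hint)
  rw [intervalIntegral.integral_of_le (by norm_num : (0:ℝ) ≤ 2)] at heq
  rw [heq, Ftc_two, Ftc_zero]
  norm_num

lemma integrableOn_Ioc_psiTC : IntegrableOn psiTC (Ioc 0 2) :=
  intervalIntegral.integrableOn_deriv_of_nonneg Ftc_continuousOn
    (fun x hx => Ftc_hasDerivAt hx.1 hx.2) (fun x hx => psiTC_nonneg hx.1.ne')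

lemma psiTC_eq_Ioi {x : ℝ} (hx : 2 ≤ x) : psiTC x = 2 / x ^ 3 := by
  have habs : |x| = x := abs_of_nonneg (by linarith)
  rw [psiTC, if_neg (by rw [habs]; exact not_lt.2 hx), habs]

lemma G_cont : ContinuousWithinAt (fun y : ℝ => -((y ^ 2)⁻¹)) (Ici 2) 2 :=
  (((continuous_pow 2).continuousAt).inv₀ (by norm_num)).neg.continuousWithinAt

lemma G_deriv : ∀ x ∈ Ioi (2:ℝ), HasDerivAt (fun y : ℝ => -((y ^ 2)⁻¹)) (psiTC x) x := by
  intro x hx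
  have hx2 : (2:ℝ) < x := hx
  have hx0 : (0:ℝ) < x := by linarith
  have hp : HasDerivAt (fun y : ℝ => y ^ 2) (2 * x) x := by simpa using hasDerivAt_pow 2 x
  have := (hp.inv (by positivity)).neg
  rw [psiTC_eq_Ioi hx2.le]
  refine this.congr_deriv ?_
  symm
  field_simp

lemma G_pos : ∀ x ∈ Ioi (2:ℝ), 0 ≤ psiTC x := by
  intro x hx
  exact psiTC_nonneg (by intro h; rw [h] at hx; exact absurd hx (by norm_num))

lemma G_tendsto : Tendsto (fun y : ℝ => -((y ^ 2)⁻¹)) atTop (𝓝 0) := by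
  have h : Tendsto (fun y : ℝ => (y ^ 2)⁻¹) atTop (𝓝 0) :=
    (tendsto_pow_atTop two_ne_zero).inv_tendsto_atTop
  simpa using h.neg

lemma integral_Ioi_psiTC : ∫ x in Ioi (2:ℝ), psiTC x = 1 / 4 := by
  have := MeasureTheory.integral_Ioi_of_hasDerivAt_of_nonneg G_cont G_deriv G_pos G_tendsto
  rw [this]
  norm_num

lemma integrableOn_Ioi_psiTC : IntegrableOn psiTC (Ioi 2) :=
  MeasureTheory.integrableOn_Ioi_deriv_of_nonneg G_cont G_deriv G_pos G_tendsto

theorem psiTC_nonneg_and_integral_one :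
    (∀ x : ℝ, x ≠ 0 → 0 ≤ psiTC x) ∧ ∫ x : ℝ, psiTC x = 1 := by
  refine ⟨fun x hx => psiTC_nonneg hx, ?_⟩
  have hsplit : ∫ x in Ioi (0:ℝ), psiTC x = 1 / 2 := by
    rw [← Ioc_union_Ioi_eq_Ioi (by norm_num : (0:ℝ) ≤ 2),
      MeasureTheory.setIntegral_union (Ioc_disjoint_Ioi le_rfl) measurableSet_Ioi
        integrableOn_Ioc_psiTC integrableOn_Ioi_psiTC,
      integral_Ioc_psiTC, integral_Ioi_psiTC]
    norm_num
  have habs : psiTC = fun x => psiTC |x| := funext fun x => (psiTC_abs x).symm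
  rw [show (∫ x : ℝ, psiTC x) = ∫ x : ℝ, psiTC |x| by rw [← habs],
    integral_comp_abs, hsplit]
  norm_num
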